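/- Let p : E ⥤ B be a Grothendieck (cartesian) fibration of categories. Define L to be the class of morphisms in E sent to isomorphisms by p, and R the class of p-cartesian morphisms. Then every morphism in L is left orthogonal to every morphism in R: for every commutative square with left edge in L and right edge in R there exists a unique diagonal lift. -/
import Mathlib


open CategoryTheory CategoryTheory.Limits

def StronglyCartesian {E B : Type*} [Category E] [Category B] (p : E ⥤ B)
    {x' x : E} (f : x' ⟶ x) : Prop :=
  ∀ {z : E} (g : z ⟶ x) (h : p.obj z ⟶ p.obj x'),
    p.map g = h ≫ p.map f → ∃! k : z ⟶ x', p.map k = h ∧ k ≫ f = g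

/-- `p` is a Grothendieck fibration: every `h : b ⟶ p x` admits a strongly cartesian
lift with codomain `x`. -/
def GrothFibration {E B : Type*} [Category E] [Category B] (p : E ⥤ B) : Prop :=
  ∀ (x : E) {b : B} (h : b ⟶ p.obj x), ∃ (x' : E) (f : x' ⟶ x) (e : p.obj x' = b),
    StronglyCartesian p f ∧ p.map f = eqToHom e ≫ h

/-- For a Grothendieck fibration `p`, every morphism inverted by `p` is left orthogonal
to every `p`-cartesian morphism. -/
theorem inverted_left_orthogonal_cartesian {E B : Type*} [Category E] [Category B]
    (p : E ⥤ B) (hp : GrothFibration p)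
    {a b c d : E} (l : a ⟶ b) (r : c ⟶ d)
    (hl : IsIso (p.map l)) (hr : StronglyCartesian p r)
    (u : a ⟶ c) (v : b ⟶ d) (hsq : u ≫ r = l ≫ v) :
    ∃! w : b ⟶ c, l ≫ w = u ∧ w ≫ r = v := by
  have hpu : p.map u ≫ p.map r = p.map l ≫ p.map v := by
    rw [← p.map_comp, ← p.map_comp, hsq]
  have hv : p.map v = (inv (p.map l) ≫ p.map u) ≫ p.map r := by
    simp [Category.assoc, ← hpu]
  obtain ⟨w, ⟨hw1, hw2⟩, hwu⟩ := hr v (inv (p.map l) ≫ p.map u) hv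
  have hlw : l ≫ w = u := by
    have hu : p.map (u ≫ r) = p.map u ≫ p.map r := p.map_comp u r
    obtain ⟨k, _, hku⟩ := hr (u ≫ r) (p.map u) hu
    have h1 := hku (l ≫ w) ⟨by simp [hw1], by rw [Category.assoc, hw2, hsq]⟩
    have h2 := hku u ⟨rfl, rfl⟩
    rw [h1, h2]
  refine ⟨w, ⟨hlw, hw2⟩, ?_⟩
  rintro w' ⟨h1, h2⟩
  apply hwu
  refine ⟨?_, h2⟩
  have : p.map l ≫ p.map w' = p.map u := by rw [← p.map_comp, h1]
  rw [← this]
  simp
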